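/- For T = T_r with r > 0 (so γ₀ = 0 and γ_j ≠ 0 for 1 ≤ j ≤ n−1) and û with Σ_{j=1}^{n−1}|û_j|² ≠ 0, the fixed point function satisfies lim_{λ→∞} f(λ)/λ² = κ_∞(ũ, T_r) where κ_∞(ũ, T_r) = (Σ_{j=1}^{n−1}|û_j|²) / ((n−1)·Σ_{j=1}^{n−1}|û_j|²/|γ_j|²). -/

import Mathlib

open Matrix Complex Filter

lemma aux_denom_atTop (c : ℝ) (hc : 0 < c) :
    Tendsto (fun l : ℝ => 1 + l * c) atTop atTop :=
  tendsto_atTop_add_const_left _ 1 (Tendsto.atTop_mul_const hc tendsto_id)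

lemma aux_inv (c : ℝ) (hc : 0 < c) :
    Tendsto (fun l : ℝ => (1 + l * c)⁻¹) atTop (nhds 0) :=
  tendsto_inv_atTop_zero.comp (aux_denom_atTop c hc)

lemma aux_ratio (c : ℝ) (hc : 0 < c) :
    Tendsto (fun l : ℝ => l * c / (1 + l * c)) atTop (nhds 1) := by
  have h1 : Tendsto (fun l : ℝ => c / (l⁻¹ + c)) atTop (nhds 1) := by
    have := (tendsto_const_nhds (α := ℝ) (x := c)).div
      ((tendsto_inv_atTop_zero).add (tendsto_const_nhds (x := c)))
      (by simp [hc.ne'] : (0:ℝ) + c ≠ 0)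
    rw [zero_add, div_self hc.ne'] at this
    exact this
  refine h1.congr' ?_
  filter_upwards [eventually_gt_atTop (0:ℝ)] with l hl
  have hl' : l ≠ 0 := hl.ne'
  field_simp

lemma aux_eq (A B C D lam : ℝ) (hl : lam ≠ 0) :
    (lam^2 * A / (lam^2 * B)) * (C / (lam * D)) = lam * (A/B) * (C/D) / lam^2 := by
  by_cases hB : B = 0
  · simp [hB]
  by_cases hD : D = 0
  · simp [hD]
  field_simp


set_option maxHeartbeats 1000000 in
/-- for `T = T_r` with `r > 0` (so `γ₀ = 0`, `|γ_j|² = 4^r sin^{2r}(πj/n) > 0`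
for `1 ≤ j ≤ n−1`) and `Σ_{j≠0}|û_j|² ≠ 0`, the fixed point function satisfies
`lim_{λ→∞} f(λ)/λ² = κ_∞ = (Σ_{j≠0}|û_j|²)/((n−1)·Σ_{j≠0}|û_j|²/|γ_j|²)`. -/
theorem fixed_point_asymptotics
    (n r : ℕ) [NeZero n] (hn : 2 ≤ n) (hr : 0 < r)
    (uhat : Fin n → ℂ)
    (a w : Fin n → ℝ)
    (ha : ∀ j : Fin n, a j = 4 ^ r * Real.sin (Real.pi * (j : ℕ) / n) ^ (2 * r))
    (hw : ∀ j, w j = ‖uhat j‖ ^ 2)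
    (hwsum : ∑ j ∈ Finset.univ.erase (0 : Fin n), w j ≠ 0)
    (f : ℝ → ℝ)
    (hf : ∀ lam : ℝ, f lam =
      lam * ((∑ j, (a j) ^ 2 * w j / (1 + lam * a j) ^ 2) /
          (∑ j, a j * w j / (1 + lam * a j) ^ 2)) *
        ((∑ j, (1 + lam * a j)⁻¹) / (∑ j, a j / (1 + lam * a j)))) :
    Tendsto (fun lam => f lam / lam ^ 2) atTop
      (nhds ((∑ j ∈ Finset.univ.erase (0 : Fin n), w j) /
        (((n : ℝ) - 1) * ∑ j ∈ Finset.univ.erase (0 : Fin n), w j / a j))) := by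
  have h2r : 2 * r ≠ 0 := by positivity
  have ha0 : a 0 = 0 := by
    rw [ha]
    simp [zero_pow h2r]
  have hapos : ∀ j : Fin n, j ≠ 0 → 0 < a j := by
    intro j hj
    have hj0 : 0 < ((j : ℕ) : ℝ) := by
      have : (j : ℕ) ≠ 0 := fun h => hj (Fin.ext (by simpa using h))
      exact_mod_cast Nat.pos_of_ne_zero this
    have hjn : ((j : ℕ) : ℝ) < (n : ℝ) := by exact_mod_cast j.isLt
    have hnpos : (0:ℝ) < n := by positivity
    have hsin : 0 < Real.sin (Real.pi * (j : ℕ) / n) := by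
      apply Real.sin_pos_of_pos_of_lt_pi
      · positivity
      · rw [div_lt_iff₀ hnpos]
        calc Real.pi * (j:ℕ) < Real.pi * n := by
              exact mul_lt_mul_of_pos_left hjn Real.pi_pos
          _ = Real.pi * n := rfl
    rw [ha]
    exact mul_pos (by positivity) (pow_pos hsin _)
  have hwnn : ∀ j, 0 ≤ w j := fun j => by rw [hw]; positivity
  set W := ∑ j ∈ Finset.univ.erase (0 : Fin n), w j with hW
  set V := ∑ j ∈ Finset.univ.erase (0 : Fin n), w j / a j with hV
  have hVpos : 0 < V := by
    obtain ⟨i, hi, hip⟩ : ∃ i ∈ Finset.univ.erase (0 : Fin n), 0 < w i := by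
      by_contra h
      push_neg at h
      exact hwsum (Finset.sum_eq_zero fun j hj => le_antisymm (h j hj) (hwnn j))
    refine Finset.sum_pos' (fun j hj => ?_) ⟨i, hi, ?_⟩
    · exact div_nonneg (hwnn j) (hapos j (Finset.ne_of_mem_erase hj)).le
    · exact div_pos hip (hapos i (Finset.ne_of_mem_erase hi))
  have hn1 : ((n : ℝ) - 1) ≠ 0 := by
    have : (2:ℝ) ≤ n := by exact_mod_cast hn
    linarith
  -- limit of lam^2 * A
  have h1 : Tendsto (fun l : ℝ => l^2 * ∑ j, a j ^ 2 * w j / (1 + l * a j) ^ 2)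
      atTop (nhds W) := by
    have key : Tendsto (fun l : ℝ => ∑ j, l^2 * (a j ^ 2 * w j / (1 + l * a j) ^ 2))
        atTop (nhds (∑ j : Fin n, if j = 0 then 0 else w j)) := by
      apply tendsto_finset_sum
      intro j _
      by_cases hj : j = 0
      · subst hj; simpa [ha0] using tendsto_const_nhds (α := ℝ) (x := (0:ℝ))
      · simp only [if_neg hj]
        have hc := hapos j hj
        have heq : (fun l : ℝ => l^2 * (a j ^ 2 * w j / (1 + l * a j) ^ 2)) =
            fun l => w j * (l * a j / (1 + l * a j)) ^ 2 := by
          funext l; rw [div_pow]; ring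
        rw [heq]
        simpa using ((aux_ratio (a j) hc).pow 2).const_mul (w j)
    have hsum : (∑ j : Fin n, if j = 0 then 0 else w j) = W := by
      rw [hW, ← Finset.sum_erase (f := fun j : Fin n => if j = 0 then (0:ℝ) else w j) (a := (0 : Fin n))
        Finset.univ (by simp)]
      refine Finset.sum_congr rfl fun j hj => ?_
      rw [if_neg (Finset.ne_of_mem_erase hj)]
    rw [hsum] at key
    exact key.congr fun l => (Finset.mul_sum _ _ _).symm
  -- limit of lam^2 * B
  have h2 : Tendsto (fun l : ℝ => l^2 * ∑ j, a j * w j / (1 + l * a j) ^ 2)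
      atTop (nhds V) := by
    have key : Tendsto (fun l : ℝ => ∑ j, l^2 * (a j * w j / (1 + l * a j) ^ 2))
        atTop (nhds (∑ j : Fin n, if j = 0 then 0 else w j / a j)) := by
      apply tendsto_finset_sum
      intro j _
      by_cases hj : j = 0
      · subst hj; simpa [ha0] using tendsto_const_nhds (α := ℝ) (x := (0:ℝ))
      · simp only [if_neg hj]
        have hc := hapos j hj
        have hane : a j ≠ 0 := hc.ne'
        have heq : (fun l : ℝ => l^2 * (a j * w j / (1 + l * a j) ^ 2)) =
            fun l => (w j / a j) * (l * a j / (1 + l * a j)) ^ 2 := by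
          funext l
          have hkey : a j * w j = (w j / a j) * (a j) ^ 2 := by
            field_simp
          rw [div_pow, hkey]; ring
        rw [heq]
        simpa using ((aux_ratio (a j) hc).pow 2).const_mul (w j / a j)
    have hsum : (∑ j : Fin n, if j = 0 then 0 else w j / a j) = V := by
      rw [hV, ← Finset.sum_erase (f := fun j : Fin n => if j = 0 then (0:ℝ) else w j / a j) (a := (0 : Fin n))
        Finset.univ (by simp)]
      refine Finset.sum_congr rfl fun j hj => ?_
      rw [if_neg (Finset.ne_of_mem_erase hj)]
    rw [hsum] at key
    exact key.congr fun l => (Finset.mul_sum _ _ _).symm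
  -- limit of C
  have h3 : Tendsto (fun l : ℝ => ∑ j, (1 + l * a j)⁻¹) atTop (nhds 1) := by
    have key : Tendsto (fun l : ℝ => ∑ j : Fin n, (1 + l * a j)⁻¹)
        atTop (nhds (∑ j : Fin n, if j = 0 then (1:ℝ) else 0)) := by
      apply tendsto_finset_sum
      intro j _
      by_cases hj : j = 0
      · subst hj; simpa [ha0] using tendsto_const_nhds (α := ℝ) (x := (1:ℝ))
      · simp only [if_neg hj]
        exact aux_inv (a j) (hapos j hj)
    simpa using key
  -- limit of lam * D
  have h4 : Tendsto (fun l : ℝ => l * ∑ j, a j / (1 + l * a j)) atTop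
      (nhds ((n : ℝ) - 1)) := by
    have key : Tendsto (fun l : ℝ => ∑ j, l * (a j / (1 + l * a j)))
        atTop (nhds (∑ j : Fin n, if j = 0 then (0:ℝ) else 1)) := by
      apply tendsto_finset_sum
      intro j _
      by_cases hj : j = 0
      · subst hj; simpa [ha0] using tendsto_const_nhds (α := ℝ) (x := (0:ℝ))
      · simp only [if_neg hj]
        have := aux_ratio (a j) (hapos j hj)
        exact this.congr fun l => mul_div_assoc _ _ _
    have hsum : (∑ j : Fin n, if j = 0 then (0:ℝ) else 1) = (n : ℝ) - 1 := by
      rw [← Finset.sum_erase (f := fun j : Fin n => if j = 0 then (0:ℝ) else 1) (a := (0 : Fin n))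
        Finset.univ (by simp)]
      have : ∀ j ∈ Finset.univ.erase (0 : Fin n),
          (if j = 0 then (0:ℝ) else 1) = 1 := fun j hj =>
        if_neg (Finset.ne_of_mem_erase hj)
      rw [Finset.sum_congr rfl this, Finset.sum_const,
        Finset.card_erase_of_mem (Finset.mem_univ _),
        Finset.card_univ, Fintype.card_fin, nsmul_eq_mul, mul_one,
        Nat.cast_sub (le_trans one_le_two hn), Nat.cast_one]
    rw [hsum] at key
    exact key.congr fun l => (Finset.mul_sum _ _ _).symm
  have hcomb := (h1.div h2 hVpos.ne').mul (h3.div h4 hn1)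
  have hval : (W / V) * (1 / ((n:ℝ) - 1)) = W / (((n:ℝ) - 1) * V) := by
    rw [div_mul_div_comm, mul_one, mul_comm]
  rw [hval] at hcomb
  refine hcomb.congr' ?_
  filter_upwards [eventually_ne_atTop (0:ℝ)] with l hl
  rw [hf l]
  exact aux_eq _ _ _ _ l hl
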